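/- Let 𝔥 ⊂ gl(7,ℝ) be the Lie subalgebra generated (under matrix commutator) by the three elements h(A₅₆, v₁, (0,-1/2)ᵀ, y₁), h(A₅₇, v₂, (1/2,0)ᵀ, y₂), and h(A'₅₆, v₃, u₃, y₃), where A₅₆ = [[-1/√2, 0],[0,0]], A₅₇ = [[0,0],[-1,0]], A'₅₆ = [[0, -1/√2],[1 - 1/(2√2), 0]], for arbitrary fixed v₁,v₂,v₃ ∈ ℝ, u₃, y₁,y₂,y₃ ∈ ℝ². Then the projection of 𝔥 to the gl(2,ℝ)-component (sending h(A,v,u,y) ↦ A) is all of gl(2,ℝ). -/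

import Mathlib

set_option maxHeartbeats 1000000


noncomputable section

open Real

attribute [local instance] LieRing.ofAssociativeRing

/-- The matrix `h(A,v,u,y)` from the paper (0-indexed entries of `A`, `u`, `y`). -/
def hMat (A : Matrix (Fin 2) (Fin 2) ℝ) (v : ℝ) (u y : Fin 2 → ℝ) :
    Matrix (Fin 7) (Fin 7) ℝ :=
  !![A.trace, -u 1, u 0, Real.sqrt 2 * v, 0, -y 0, -y 1;
     0, A 0 0, A 0 1, Real.sqrt 2 * u 0, y 0, 0, v;
     0, A 1 0, A 1 1, Real.sqrt 2 * u 1, y 1, -v, 0;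
     0, 0, 0, 0, Real.sqrt 2 * v, Real.sqrt 2 * u 0, Real.sqrt 2 * u 1;
     0, 0, 0, 0, -A.trace, 0, 0;
     0, 0, 0, 0, u 1, -A 0 0, -A 1 0;
     0, 0, 0, 0, -u 0, -A 0 1, -A 1 1]


@[simp] lemma cons_val_five' {α : Type*} (x : α) (u : Fin 6 → α) :
    Matrix.vecCons x u 5 = u 4 := rfl

@[simp] lemma cons_val_six' {α : Type*} (x : α) (u : Fin 6 → α) :
    Matrix.vecCons x u 6 = u 5 := rfl

@[simp] lemma cons_val_five'' {α : Type*} (x : α) (u : Fin 5 → α) :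
    Matrix.vecCons x u 5 = u 4 := rfl

@[simp] lemma vecHead_const {α : Type*} {n : ℕ} (c : α) :
    Matrix.vecHead (fun _ : Fin (n + 1) => c) = c := rfl

@[simp] lemma vecTail_const {α : Type*} {n : ℕ} (c : α) :
    Matrix.vecTail (fun _ : Fin (n + 1) => c) = fun _ => c := rfl

lemma hMat_add (A B : Matrix (Fin 2) (Fin 2) ℝ) (v w : ℝ) (u p y z : Fin 2 → ℝ) :
    hMat A v u y + hMat B w p z = hMat (A + B) (v + w) (u + p) (y + z) := by
  ext i j
  fin_cases i <;> fin_cases j <;>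
    simp [hMat, Matrix.trace_fin_two] <;> ring

lemma hMat_smul (r : ℝ) (A : Matrix (Fin 2) (Fin 2) ℝ) (v : ℝ) (u y : Fin 2 → ℝ) :
    r • hMat A v u y = hMat (r • A) (r * v) (r • u) (r • y) := by
  ext i j
  fin_cases i <;> fin_cases j <;>
    simp [hMat, Matrix.trace_fin_two] <;> ring

set_option maxHeartbeats 8000000 in
lemma hMat_bracket (A B : Matrix (Fin 2) (Fin 2) ℝ) (v w : ℝ) (u p y z : Fin 2 → ℝ) :
    ⁅hMat A v u y, hMat B w p z⁆ =
      hMat ⁅A, B⁆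
        (A.trace * w - B.trace * v - 2 * p 0 * u 1 + 2 * p 1 * u 0)
        ![A 0 0 * p 0 + A 0 1 * p 1 - B 0 0 * u 0 - B 0 1 * u 1,
          A 1 0 * p 0 + A 1 1 * p 1 - B 1 0 * u 0 - B 1 1 * u 1]
        ![2 * A 0 0 * z 0 + A 0 1 * z 1 + A 1 1 * z 0 - 2 * B 0 0 * y 0 - B 0 1 * y 1
            - B 1 1 * y 0 - 3 * p 0 * v + 3 * u 0 * w,
          A 0 0 * z 1 + A 1 0 * z 0 + 2 * A 1 1 * z 1 - B 0 0 * y 1 - B 1 0 * y 0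
            - 2 * B 1 1 * y 1 - 3 * p 1 * v + 3 * u 1 * w] := by
  have h2 : Real.sqrt 2 ^ 2 = 2 := Real.sq_sqrt (by norm_num)
  ext i j
  fin_cases i <;> fin_cases j <;>
    simp [hMat, Ring.lie_def, Matrix.mul_apply, Fin.sum_univ_seven, Fin.sum_univ_two,
      Matrix.trace_fin_two, Matrix.sub_apply]
  all_goals try ring_nf
  all_goals try simp [h2]
  all_goals try ring

/-- The projection to gl(2,ℝ) of the Lie subalgebra generated by the three curvature
operators from Section 3.2 is all of gl(2,ℝ). -/
theorem projection_is_gl2 (v₁ v₂ v₃ : ℝ) (u₃ y₁ y₂ y₃ : Fin 2 → ℝ) :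
    ∀ B : Matrix (Fin 2) (Fin 2) ℝ,
      ∃ M ∈ LieSubalgebra.lieSpan ℝ (Matrix (Fin 7) (Fin 7) ℝ)
        {hMat !![-1 / Real.sqrt 2, 0; 0, 0] v₁ ![0, -1/2] y₁,
         hMat !![0, 0; -1, 0] v₂ ![1/2, 0] y₂,
         hMat !![0, -1 / Real.sqrt 2; 1 - 1 / (2 * Real.sqrt 2), 0] v₃ u₃ y₃},
        ∃ (v : ℝ) (u y : Fin 2 → ℝ), M = hMat B v u y := by
  intro B
  have hs0 : Real.sqrt 2 ≠ 0 := by positivity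
  have hsq : Real.sqrt 2 * Real.sqrt 2 = 2 := Real.mul_self_sqrt (by norm_num)
  set s := Real.sqrt 2 with hs
  set A₁ : Matrix (Fin 2) (Fin 2) ℝ := !![-1 / s, 0; 0, 0] with hA₁
  set A₂ : Matrix (Fin 2) (Fin 2) ℝ := !![0, 0; -1, 0] with hA₂
  set A₃ : Matrix (Fin 2) (Fin 2) ℝ := !![0, -1 / s; 1 - 1 / (2 * s), 0] with hA₃
  set g₁ := hMat A₁ v₁ ![0, -1/2] y₁ with hg₁
  set g₂ := hMat A₂ v₂ ![1/2, 0] y₂ with hg₂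
  set g₃ := hMat A₃ v₃ u₃ y₃ with hg₃
  set a : ℝ := -s * (B 0 0 + B 1 1) with ha
  set c : ℝ := -s * B 0 1 with hc
  set b : ℝ := c * (1 - 1 / (2 * s)) - B 1 0 with hb
  set d : ℝ := s * B 1 1 with hd
  refine ⟨a • g₁ + b • g₂ + c • g₃ + d • ⁅g₂, g₃⁆, ?_, ?_⟩
  · have m₁ : g₁ ∈ LieSubalgebra.lieSpan ℝ (Matrix (Fin 7) (Fin 7) ℝ) {g₁, g₂, g₃} :=
      LieSubalgebra.subset_lieSpan (by simp)
    have m₂ : g₂ ∈ LieSubalgebra.lieSpan ℝ (Matrix (Fin 7) (Fin 7) ℝ) {g₁, g₂, g₃} :=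
      LieSubalgebra.subset_lieSpan (by simp)
    have m₃ : g₃ ∈ LieSubalgebra.lieSpan ℝ (Matrix (Fin 7) (Fin 7) ℝ) {g₁, g₂, g₃} :=
      LieSubalgebra.subset_lieSpan (by simp)
    exact add_mem (add_mem (add_mem (LieSubalgebra.smul_mem _ a m₁) (LieSubalgebra.smul_mem _ b m₂))
      (LieSubalgebra.smul_mem _ c m₃)) (LieSubalgebra.smul_mem _ d (LieSubalgebra.lie_mem _ m₂ m₃))
  · rw [hg₁, hg₂, hg₃, hMat_bracket, hMat_smul, hMat_smul, hMat_smul, hMat_smul,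
      hMat_add, hMat_add, hMat_add]
    have key : a • A₁ + b • A₂ + c • A₃ + d • ⁅A₂, A₃⁆ = B := by
      have h2 : s ^ 2 = 2 := by rw [hs]; exact Real.sq_sqrt (by norm_num)
      ext i j
      fin_cases i <;> fin_cases j <;>
        simp [hA₁, hA₂, hA₃, ha, hb, hc, hd, Ring.lie_def, Matrix.mul_apply,
          Fin.sum_univ_two, Matrix.sub_apply]
      all_goals try field_simp
      all_goals try ring_nf
      all_goals try simp [h2, hsq]
      all_goals try ring_nf
      all_goals try simp [h2, hsq]
      all_goals try ring
    rw [key]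
    exact ⟨_, _, _, rfl⟩

end
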